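/- arXiv:2210.12966 — 2 statements merged into one kernel-verified Lean document; each statement's English description precedes it below -/
import Mathlib

section
/- Let r > 1 be a real number. The number of positive integers n such that there exists z ∈ ℂ with Im z ≥ 1, |z| = r and |z - n| = r equals ⌊2·√(r² - 1)⌋. -/
/-- For `r > 1`, the number of positive integers `n` such that there is `z ∈ ℂ` with
`Im z ≥ 1`, `|z| = r` and `|z - n| = r` equals `⌊2·√(r² - 1)⌋`. -/
theorem card_semicircle_translates (r : ℝ) (hr : r > 1) :
    (({n : ℕ | 0 < n ∧
        ∃ z : ℂ, 1 ≤ z.im ∧ ‖z‖ = r ∧ ‖z - (n : ℂ)‖ = r}).ncard : ℤ)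
      = ⌊2 * Real.sqrt (r ^ 2 - 1)⌋ := by
  have hr1 : (0:ℝ) ≤ r ^ 2 - 1 := by nlinarith
  set x : ℝ := 2 * Real.sqrt (r ^ 2 - 1) with hx
  have hx0 : 0 ≤ x := by positivity
  have hsq : Real.sqrt (r ^ 2 - 1) ^ 2 = r ^ 2 - 1 := Real.sq_sqrt hr1
  have hset : {n : ℕ | 0 < n ∧
        ∃ z : ℂ, 1 ≤ z.im ∧ ‖z‖ = r ∧ ‖z - (n : ℂ)‖ = r}
      = {n : ℕ | 0 < n ∧ (n : ℝ) ≤ x} := by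
    ext n
    simp only [Set.mem_setOf_eq]
    constructor
    · rintro ⟨hn, z, him, h1, h2⟩
      refine ⟨hn, ?_⟩
      have e1 : z.re ^ 2 + z.im ^ 2 = r ^ 2 := by
        have h : Complex.normSq z = r ^ 2 := by rw [← Complex.sq_norm, h1]
        simpa [Complex.normSq_apply, sq] using h
      have e2 : (z.re - n) ^ 2 + z.im ^ 2 = r ^ 2 := by
        have h : Complex.normSq (z - (n:ℂ)) = r ^ 2 := by rw [← Complex.sq_norm, h2]
        simpa [Complex.normSq_apply, Complex.sub_re, Complex.sub_im, sq] using h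
      have hnpos : (0:ℝ) < n := by exact_mod_cast hn
      have h3 : (n:ℝ) * (2 * z.re - n) = 0 := by linear_combination e1 - e2
      have hre : 2 * z.re = (n:ℝ) := by
        rcases mul_eq_zero.mp h3 with h | h
        · exact absurd h (ne_of_gt hnpos)
        · linarith
      have hn2 : (n:ℝ) ^ 2 ≤ 4 * (r ^ 2 - 1) := by nlinarith [sq_nonneg (z.im - 1)]
      have hxsq : x ^ 2 = 4 * (r ^ 2 - 1) := by rw [hx]; nlinarith [hsq]
      nlinarith [sq_nonneg ((n:ℝ) - x), sq_nonneg ((n:ℝ) + x)]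
    · rintro ⟨hn, hle⟩
      have hn2 : (n : ℝ) ^ 2 ≤ 4 * (r ^ 2 - 1) := by
        nlinarith [Real.sqrt_nonneg (r ^ 2 - 1)]
      have hb0 : (0:ℝ) ≤ r ^ 2 - (n : ℝ) ^ 2 / 4 := by nlinarith
      set b : ℝ := Real.sqrt (r ^ 2 - (n : ℝ) ^ 2 / 4) with hb
      have hbsq : b ^ 2 = r ^ 2 - (n : ℝ) ^ 2 / 4 := Real.sq_sqrt hb0
      have hb1 : 1 ≤ b := by
        rw [hb, show (1:ℝ) = Real.sqrt 1 by simp]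
        apply Real.sqrt_le_sqrt
        nlinarith
      have hr0 : (0:ℝ) ≤ r := by linarith
      refine ⟨hn, ⟨(n : ℝ) / 2, b⟩, hb1, ?_, ?_⟩
      · have hns : Complex.normSq (⟨(n : ℝ) / 2, b⟩ : ℂ) = r ^ 2 := by
          rw [Complex.normSq_mk]; linear_combination hbsq
        rw [Complex.norm_def, hns, Real.sqrt_sq hr0]
      · have hz : (⟨(n : ℝ) / 2, b⟩ : ℂ) - (n : ℂ) = ⟨(n : ℝ) / 2 - n, b⟩ := by
          apply Complex.ext <;>
            simp [Complex.sub_re, Complex.sub_im]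
        have hns : Complex.normSq (⟨(n : ℝ) / 2 - n, b⟩ : ℂ) = r ^ 2 := by
          rw [Complex.normSq_mk]; linear_combination hbsq
        rw [hz, Complex.norm_def, hns, Real.sqrt_sq hr0]
  rw [hset]
  have hset2 : {n : ℕ | 0 < n ∧ (n : ℝ) ≤ x} = ↑(Finset.Icc 1 ⌊x⌋₊) := by
    ext n
    simp only [Set.mem_setOf_eq, Finset.coe_Icc, Set.mem_Icc, Nat.le_floor_iff hx0]
    exact ⟨fun ⟨h1, h2⟩ => ⟨h1, h2⟩, fun ⟨h1, h2⟩ => ⟨h1, h2⟩⟩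
  rw [hset2, Set.ncard_coe_finset, Nat.card_Icc]
  simp only [Nat.add_sub_cancel]
  exact_mod_cast Int.natCast_floor_eq_floor hx0
end

section
/- Let N > e be a real number and let p and q be points of the hyperbolic upper half-plane ℍ. Let T denote the horizontal translation z ↦ z + 1 of ℍ. If dist(p, T(p)) = 2·arsinh(1) and dist(q, T(q)) ≤ 2/N, then dist(p, q) ≥ log(1/sinh(1/N)). -/
open UpperHalfPlane

/-- If the parabolic translation `z ↦ z + 1` displaces `p` by `2·arsinh 1` and `q` by at most
`2/N` (with `N > e`), then `dist p q ≥ log(1/sinh(1/N))`. -/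
theorem dist_thick_to_thin_cusp (N : ℝ) (hN : N > Real.exp 1)
    (p q Tp Tq : UpperHalfPlane)
    (hTp : (Tp : ℂ) = (p : ℂ) + 1) (hTq : (Tq : ℂ) = (q : ℂ) + 1)
    (hp : dist p Tp = 2 * Real.arsinh 1) (hq : dist q Tq ≤ 2 / N) :
    dist p q ≥ Real.log (1 / Real.sinh (1 / N)) := by
  have hN0 : (0:ℝ) < N := lt_trans (Real.exp_pos 1) hN
  have hpim : 0 < p.im := p.im_pos
  have hqim : 0 < q.im := q.im_pos
  have himTp : Tp.im = p.im := by
    have := congrArg Complex.im hTp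
    simpa [UpperHalfPlane.coe_im] using this
  have himTq : Tq.im = q.im := by
    have := congrArg Complex.im hTq
    simpa [UpperHalfPlane.coe_im] using this
  have hdp : dist (p:ℂ) Tp = 1 := by
    rw [hTp]; simp [Complex.dist_eq]
  have hdq : dist (q:ℂ) Tq = 1 := by
    rw [hTq]; simp [Complex.dist_eq]
  -- p.im = 1/2
  have hsq : Real.sqrt (p.im * Tp.im) = p.im := by
    rw [himTp, Real.sqrt_mul_self hpim.le]
  have hp' : Real.arsinh (1 / (2 * p.im)) = Real.arsinh 1 := by
    have := hp
    rw [UpperHalfPlane.dist_eq, hdp, hsq] at this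
    have h2 : Real.arsinh (1 / (2 * p.im)) = Real.arsinh 1 := by
      have := mul_left_cancel₀ (two_ne_zero (α := ℝ)) this
      exact this
    exact h2
  have hpim2 : p.im = 1 / 2 := by
    have := Real.arsinh_injective hp'
    have h2p : 2 * p.im ≠ 0 := by positivity
    field_simp at this
    linarith
  -- q.im ≥ 1 / (2 sinh (1/N))
  have hsq' : Real.sqrt (q.im * Tq.im) = q.im := by
    rw [himTq, Real.sqrt_mul_self hqim.le]
  have hq' : Real.arsinh (1 / (2 * q.im)) ≤ 1 / N := by
    have := hq
    rw [UpperHalfPlane.dist_eq, hdq, hsq'] at this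
    have h2 : 2 / N = 2 * (1 / N) := by ring
    rw [h2] at this
    linarith
  have hsinh : 1 / (2 * q.im) ≤ Real.sinh (1 / N) := by
    have := Real.sinh_le_sinh.mpr hq'
    rwa [Real.sinh_arsinh] at this
  have hsinhpos : 0 < Real.sinh (1 / N) :=
    lt_of_lt_of_le (by positivity) hsinh
  have hqim2 : 1 / (2 * Real.sinh (1 / N)) ≤ q.im := by
    rw [div_le_iff₀ (by positivity)]
    rw [div_le_iff₀ (by positivity : (0:ℝ) < 2 * q.im)] at hsinh
    nlinarith [hsinh]
  -- conclude via log im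
  have hkey : dist (Real.log p.im) (Real.log q.im) ≤ dist p q :=
    UpperHalfPlane.dist_log_im_le p q
  have hlog : Real.log q.im - Real.log p.im ≤ dist p q := by
    have : Real.log q.im - Real.log p.im ≤ |Real.log q.im - Real.log p.im| := le_abs_self _
    calc Real.log q.im - Real.log p.im ≤ |Real.log q.im - Real.log p.im| := this
      _ = dist (Real.log q.im) (Real.log p.im) := (Real.dist_eq _ _).symm
      _ = dist (Real.log p.im) (Real.log q.im) := dist_comm _ _
      _ ≤ dist p q := hkey
  have hlogq : Real.log (1 / (2 * Real.sinh (1 / N))) ≤ Real.log q.im :=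
    Real.log_le_log (by positivity) hqim2
  have hlogp : Real.log p.im = Real.log (1/2) := by rw [hpim2]
  have hfin : Real.log (1 / Real.sinh (1 / N)) =
      Real.log (1 / (2 * Real.sinh (1 / N))) - Real.log (1/2) := by
    rw [Real.log_div one_ne_zero hsinhpos.ne', Real.log_div one_ne_zero (by positivity : (2 * Real.sinh (1/N)) ≠ 0), Real.log_div one_ne_zero two_ne_zero,
      Real.log_mul two_ne_zero hsinhpos.ne']
    simp [Real.log_one]
  rw [ge_iff_le, hfin]
  calc Real.log (1 / (2 * Real.sinh (1 / N))) - Real.log (1/2)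
      ≤ Real.log q.im - Real.log p.im := by rw [hlogp]; linarith
    _ ≤ dist p q := hlog
end
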